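/- arXiv:2208.12947 — 2 statements merged into one kernel-verified Lean document; each statement's English description precedes it below -/
import Mathlib

section
/- Let q > 0. If m and n are loops for q, then the composition mn is a loop for q and its weight is multiplicative: w_q(mn) = w_q(m) · w_q(n). -/
noncomputable def cfRev (q : ℝ) : List ℤ → ℝ
  | [] => 0
  | [a] => (a : ℝ)
  | a :: b :: rest => (a : ℝ) + 1 / (q * cfRev q (b :: rest))

/-- `cf q [m₀, …, m_k]` is the continued fraction `m_k + 1/(q m_{k-1} + q/( … + q/(q m₀)))`. -/
noncomputable def cf (q : ℝ) (l : List ℤ) : ℝ := cfRev q l.reverse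

/-- `l` is a path for `q`: all denominators nonzero, i.e. every proper nonempty prefix
has nonzero continued-fraction value. -/
def IsPath (q : ℝ) (l : List ℤ) : Prop :=
  l ≠ [] ∧ ∀ t : List ℤ, t ≠ [] → t <+: l → t.length < l.length → cf q t ≠ 0

/-- all entries except possibly the last are nonzero -/
def IsProper (l : List ℤ) : Prop := ∀ i, i + 1 < l.length → l.getD i 0 ≠ 0

def IsLoop (q : ℝ) (l : List ℤ) : Prop := IsPath q l ∧ cf q l = 0

/-- the weight `q^{k/2} ∏_{j<k} |c(q, m_j)|`. -/
noncomputable def weight (q : ℝ) (l : List ℤ) : ℝ :=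
  Real.sqrt (q ^ (l.length - 1)) * ∏ j ∈ Finset.range (l.length - 1), |cf q (l.take (j + 1))|

/-- composition of paths -/
def comp (m n : List ℤ) : List ℤ := m.dropLast ++ (m.getLastD 0 + n.headD 0) :: n.tail

/-- one step of zero-skipping -/
def SkipStep (l l' : List ℤ) : Prop :=
  ∃ (u v : List ℤ) (x y : ℤ), l = u ++ x :: 0 :: y :: v ∧ l' = u ++ (x + y) :: v

/-- the weight `w_q` is unique -/
def WeightUnique (q : ℝ) : Prop :=
  ∀ m n : List ℤ, IsPath q m → IsProper m → IsPath q n → IsProper n →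
    cf q m = cf q n → weight q m = weight q n

lemma cf_singleton (q : ℝ) (a : ℤ) : cf q [a] = a := rfl

lemma cf_concat (q : ℝ) (l : List ℤ) (hl : l ≠ []) (a : ℤ) :
    cf q (l ++ [a]) = a + 1 / (q * cf q l) := by
  obtain ⟨b, r, hbr⟩ := List.exists_cons_of_ne_nil (l := l.reverse) (by simpa using hl)
  simp only [cf, List.reverse_append, List.reverse_singleton, List.singleton_append, hbr, cfRev]

lemma cf_append_congr (q : ℝ) (l1 l2 : List ℤ) (h1 : l1 ≠ []) (h2 : l2 ≠ [])
    (h : cf q l1 = cf q l2) : ∀ s : List ℤ, cf q (l1 ++ s) = cf q (l2 ++ s) := by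
  intro s
  induction s using List.reverseRecOn with
  | nil => simpa using h
  | append_singleton s a ih =>
    rw [← List.append_assoc, ← List.append_assoc,
      cf_concat q _ (by simp [h1]) a, cf_concat q _ (by simp [h2]) a, ih]

lemma weight_singleton (q : ℝ) (a : ℤ) : weight q [a] = 1 := by
  simp [weight]

theorem stmt3 (q : ℝ) (hq : 0 < q) (m n : List ℤ) (hm : IsLoop q m) (hn : IsLoop q n) :
    IsLoop q (comp m n) ∧ weight q (comp m n) = weight q m * weight q n := by
  obtain ⟨y, t, rfl⟩ : ∃ y t, n = y :: t :=
    ⟨n.head hn.1.1, n.tail, (List.cons_head_tail hn.1.1).symm⟩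
  rcases List.eq_nil_or_concat m with rfl | ⟨d, x, rfl⟩
  · exact absurd rfl hm.1.1
  rw [List.concat_eq_append] at *
  -- compute comp
  have hcomp : comp (d ++ [x]) (y :: t) = d ++ (x + y) :: t := by
    simp [comp, List.dropLast_concat, List.getLastD_concat]
  rcases eq_or_ne d [] with rfl | hd
  · -- m = [x], x = 0
    have hx : (x : ℝ) = 0 := hm.2
    have hx0 : x = 0 := by exact_mod_cast hx
    simp only [List.nil_append] at *
    subst hx0
    rw [hcomp]
    simp only [zero_add]
    exact ⟨hn, by rw [weight_singleton]; ring⟩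
  rcases eq_or_ne t ([] : List ℤ) with rfl | ht
  · -- n = [y], y = 0
    have hy : (y : ℝ) = 0 := hn.2
    have hy0 : y = 0 := by exact_mod_cast hy
    subst hy0
    rw [hcomp]
    simp only [add_zero]
    exact ⟨hm, by rw [weight_singleton]; ring⟩
  -- main case
  have hdx : d ++ [x] ≠ [] := by simp
  have hdxy : d ++ [x + y] ≠ ([] : List ℤ) := by simp
  -- cf (d ++ [x+y]) = cf [y]
  have hbase : cf q (d ++ [x + y]) = cf q [y] := by
    have h0 := hm.2
    rw [cf_concat q d hd] at h0
    rw [cf_concat q d hd, cf_singleton]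
    push_cast
    linarith
  have hkey : ∀ s : List ℤ, cf q ((d ++ [x + y]) ++ s) = cf q (y :: s) := by
    intro s
    have := cf_append_congr q (d ++ [x + y]) [y] hdxy (by simp) hbase s
    simpa using this
  have hassoc : d ++ (x + y) :: t = (d ++ [x + y]) ++ t := by simp
  -- take of comp, low indices
  have htakelow : ∀ i : ℕ, i ≤ d.length →
      (d ++ (x + y) :: t).take i = (d ++ [x]).take i := by
    intro i hi
    rw [List.take_append_of_le_length hi, List.take_append_of_le_length hi]
  -- take of comp, high indices
  have hlen1 : (d ++ [x + y]).length = d.length + 1 := by simp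
  have htakehigh : ∀ j : ℕ,
      (d ++ (x + y) :: t).take (d.length + 1 + j) = (d ++ [x + y]) ++ t.take j := by
    intro j
    rw [hassoc, ← hlen1, List.take_length_add_append]
  have hcfhigh : ∀ j : ℕ, cf q ((d ++ (x + y) :: t).take (d.length + 1 + j))
      = cf q ((y :: t).take (j + 1)) := by
    intro j
    rw [htakehigh, hkey, List.take_succ_cons]
  constructor
  · rw [hcomp]
    refine ⟨⟨by simp, ?_⟩, ?_⟩
    · intro p hp hpre hplen
      rw [List.prefix_iff_eq_take] at hpre
      have hip : 1 ≤ p.length := List.length_pos_iff.mpr hp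
      have hilen : p.length < d.length + 1 + t.length := by
        simp only [List.length_append, List.length_cons] at hplen
        omega
      rcases le_or_gt p.length d.length with hle | hgt
      · -- prefix of m
        have heq : p = (d ++ [x]).take p.length := hpre.trans (htakelow p.length hle)
        rw [heq]
        apply hm.1.2
        · rw [← heq]; exact hp
        · exact List.take_prefix _ _
        · simp only [List.length_take, List.length_append, List.length_singleton]
          omega
      · -- prefix of n
        obtain ⟨j, hj⟩ : ∃ j, p.length = d.length + 1 + j := ⟨p.length - (d.length + 1), by omega⟩
        have hjt : j < t.length := by omega
        rw [hpre]; rw [hj, hcfhigh j]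
        apply hn.1.2
        · simp [List.take_succ_cons]
        · exact List.take_prefix _ _
        · simp only [List.length_take, List.length_cons]
          omega
    · rw [hassoc]
      have := hkey t
      rw [this]
      exact hn.2
  · -- weight
    rw [hcomp]
    have hlc : (d ++ (x + y) :: t).length - 1 = d.length + t.length := by simp
    have hlm : (d ++ [x]).length - 1 = d.length := by simp
    have hln : (y :: t).length - 1 = t.length := by simp
    rw [weight, weight, weight, hlc, hlm, hln]
    rw [pow_add, Real.sqrt_mul (by positivity), Finset.prod_range_add]
    have e1 : ∀ j ∈ Finset.range d.length,
        |cf q ((d ++ (x + y) :: t).take (j + 1))| = |cf q ((d ++ [x]).take (j + 1))| := by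
      intro j hj
      rw [htakelow (j + 1) (by simpa using Finset.mem_range.mp hj)]
    have e2 : ∀ j ∈ Finset.range t.length,
        |cf q ((d ++ (x + y) :: t).take (d.length + j + 1))| = |cf q ((y :: t).take (j + 1))| := by
      intro j hj
      have h3 : d.length + j + 1 = d.length + 1 + j := by omega
      rw [h3, hcfhigh j]
    rw [Finset.prod_congr rfl e1, Finset.prod_congr rfl e2]
    ring
end

section
/- Let q > 0 and suppose there exists a loop m for q of odd length. Then for every integer n ≥ 2 the weight w_{q/n} is not unique; that is, there exist two proper paths m', m'' for q/n with c(q/n, m') = c(q/n, m'') but w_{q/n}(m') ≠ w_{q/n}(m''). -/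
set_option linter.unnecessarySimpa false
set_option linter.unreachableTactic false
set_option linter.unusedTactic false

lemma cf_snoc (q : ℝ) {l : List ℤ} (hl : l ≠ []) (a : ℤ) :
    cf q (l ++ [a]) = a + 1 / (q * cf q l) := by
  obtain ⟨b, rest, h⟩ : ∃ b rest, l.reverse = b :: rest := by
    cases hr : l.reverse with
    | nil => exact absurd (List.reverse_eq_nil_iff.mp hr) hl
    | cons b rest => exact ⟨b, rest, rfl⟩
  simp only [cf, List.reverse_append, List.reverse_singleton, List.singleton_append, h, cfRev]

lemma cf_append_congr_s8 (q : ℝ) {l₁ l₂ : List ℤ} (h₁ : l₁ ≠ []) (h₂ : l₂ ≠ [])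
    (h : cf q l₁ = cf q l₂) (t : List ℤ) : cf q (l₁ ++ t) = cf q (l₂ ++ t) := by
  induction t using List.reverseRecOn with
  | nil => simpa
  | append_singleton t a ih =>
    rw [← List.append_assoc, ← List.append_assoc, cf_snoc q (by simp [h₁]),
      cf_snoc q (by simp [h₂]), ih]

lemma cf_skip (q : ℝ) (hq : q ≠ 0) (u : List ℤ) (x y : ℤ)
    (hd : cf q (u ++ [x]) ≠ 0) :
    cf q (u ++ [x, 0, y]) = cf q (u ++ [x + y]) := by
  have h1 : u ++ [x, 0, y] = ((u ++ [x]) ++ [0]) ++ [y] := by simp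
  set d := cf q (u ++ [x]) with hdf
  have h2 : cf q ((u ++ [x]) ++ [0]) = 1 / (q * d) := by
    rw [cf_snoc q (by simp)]; push_cast; ring
  have h3 : cf q (u ++ [x, 0, y]) = y + d := by
    rw [h1, cf_snoc q (by simp), h2]
    have h4 : q * (1 / (q * d)) = 1 / d := by field_simp
    rw [h4, one_div_one_div]
  rcases eq_or_ne u [] with rfl | hu
  · have hdx : d = (x : ℝ) := by rw [hdf]; simp [cf_singleton]
    rw [h3, hdx]
    have : ([] : List ℤ) ++ [x + y] = [x + y] := by simp
    rw [this, cf_singleton]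
    push_cast; ring
  · rw [h3, cf_snoc q hu, hdf, cf_snoc q hu]
    push_cast; ring

lemma prefix_append_cases {α} {t a b : List α} (h : t <+: a ++ b) :
    t <+: a ∨ ∃ s, s <+: b ∧ t = a ++ s := by
  rcases le_or_gt t.length a.length with hle | hlt
  · left
    have ht := List.prefix_iff_eq_take.mp h
    rw [List.take_append, Nat.sub_eq_zero_of_le hle, List.take_zero,
      List.append_nil] at ht
    rw [ht]; exact List.take_prefix _ _
  · right
    refine ⟨b.take (t.length - a.length), List.take_prefix _ _, ?_⟩
    have ht := List.prefix_iff_eq_take.mp h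
    rw [List.take_append, List.take_of_length_le (le_of_lt hlt)] at ht
    exact ht

lemma skip_loop (q : ℝ) (hq : q ≠ 0) (u v : List ℤ) (x y : ℤ)
    (hl : IsLoop q (u ++ x :: 0 :: y :: v)) :
    IsLoop q (u ++ (x + y) :: v) := by
  obtain ⟨⟨-, hpre⟩, hcf⟩ := hl
  have hLdec : u ++ x :: 0 :: y :: v = (u ++ [x, 0, y]) ++ v := by simp
  have hL2dec : u ++ (x + y) :: v = (u ++ [x + y]) ++ v := by simp
  have hlen : (u ++ x :: 0 :: y :: v).length = u.length + 3 + v.length := by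
    simp; omega
  have hlen2 : (u ++ (x + y) :: v).length = u.length + 1 + v.length := by
    simp; omega
  -- cf q (u ++ [x]) ≠ 0
  have hd : cf q (u ++ [x]) ≠ 0 := by
    refine hpre (u ++ [x]) (by simp) ?_ ?_
    · rw [hLdec]; exact ((List.prefix_append _ [0, y]).trans (by simp)).trans
        (List.prefix_append _ v)
    · simp [hlen]; omega
  have hskip := cf_skip q hq u x y hd
  have hcong := cf_append_congr_s8 q (l₁ := u ++ [x + y]) (l₂ := u ++ [x, 0, y])
    (by simp) (by simp) hskip.symm
  refine ⟨⟨by simp, ?_⟩, ?_⟩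
  · intro t htne htpre htlen
    rw [hL2dec] at htpre
    rcases prefix_append_cases htpre with hta | ⟨s, hsb, rfl⟩
    · rcases prefix_append_cases hta with htu | ⟨s, hs1, rfl⟩
      · refine hpre t htne (htu.trans (List.prefix_append _ _)) ?_
        have := htu.length_le
        rw [hlen]; omega
      · -- t = u ++ s with s <+: [x+y]
        rcases eq_or_ne s [] with rfl | hsne
        · refine hpre _ htne ?_ ?_
          · simpa using (List.prefix_append u (x :: 0 :: y :: v))
          · rw [hlen]; simp; omega
        have hs : s = [x + y] := by
          have h5 := hs1.length_le
          have h6 : s.length = 1 := by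
            have := List.length_pos_iff.mpr hsne; simp at h5; omega
          rw [List.prefix_iff_eq_take.mp hs1, h6]; rfl
        subst hs
        rw [hskip.symm]
        have hvne : v ≠ [] := by
          rintro rfl
          rw [hlen2] at htlen
          simp at htlen
        refine hpre _ (by simp) ?_ ?_
        · rw [hLdec]; exact List.prefix_append _ _
        · rw [hlen]
          have := List.length_pos_iff.mpr hvne
          simp; omega
    · -- t = (u ++ [x+y]) ++ s, s <+: v
      have hslen : s.length < v.length := by
        rw [hlen2] at htlen
        have : ((u ++ [x + y]) ++ s).length = u.length + 1 + s.length := by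
          simp; omega
        omega
      rw [hcong s]
      refine hpre _ (by simp) ?_ ?_
      · rw [hLdec]
        obtain ⟨r, hr⟩ := hsb
        exact ⟨r, by rw [← hr]; simp⟩
      · rw [hlen]; simp; omega
  · rw [hL2dec, hcong v, ← hLdec, hcf]

lemma exists_proper_loop (q : ℝ) (hq : q ≠ 0) :
    ∀ N : ℕ, ∀ l : List ℤ, l.length ≤ N → IsLoop q l → Odd (l.length - 1) →
      ∃ p : List ℤ, IsLoop q p ∧ Odd (p.length - 1) ∧ IsProper p := by
  intro N
  induction N with
  | zero =>
    intro l hlen hl _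
    exact absurd (List.length_eq_zero_iff.mp (Nat.le_zero.mp hlen)) hl.1.1
  | succ N ih =>
    intro l hlen hl hodd
    by_cases hp : IsProper l
    · exact ⟨l, hl, hodd, hp⟩
    · rw [IsProper] at hp
      push_neg at hp
      obtain ⟨i, hi, hi0⟩ := hp
      have hlen2 : 2 ≤ l.length := by omega
      -- i ≥ 1
      have hi1 : 1 ≤ i := by
        by_contra h
        push_neg at h
        interval_cases i
        obtain ⟨a, rest, rfl⟩ : ∃ a rest, l = a :: rest := by
          cases l with
          | nil => simp at hi
          | cons a rest => exact ⟨a, rest, rfl⟩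
        have ha : a = 0 := by simpa using hi0
        have h2 := hl.1.2 [a] (by simp) ⟨rest, rfl⟩ (by simp at hi ⊢; omega)
        rw [ha, cf_singleton] at h2
        exact h2 (by norm_num)
      obtain ⟨j, rfl⟩ : ∃ j, i = j + 1 := ⟨i - 1, by omega⟩
      -- decompose l
      have hd1 : l.drop j = l[j] :: l.drop (j + 1) := List.drop_eq_getElem_cons (by omega)
      have hd2 : l.drop (j + 1) = l[j+1] :: l.drop (j + 2) :=
        List.drop_eq_getElem_cons (by omega)
      have hd3 : l.drop (j + 2) = l[j+2] :: l.drop (j + 3) :=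
        List.drop_eq_getElem_cons (by omega)
      have hiz : l[j+1] = 0 := by rwa [List.getD_eq_getElem l 0 (by omega)] at hi0
      have hdec : l = l.take j ++ l[j] :: 0 :: l[j+2] :: l.drop (j + 3) := by
        conv_lhs => rw [← List.take_append_drop j l]
        rw [hd1, hd2, hd3, hiz]
      have hl2 : IsLoop q (l.take j ++ (l[j] + l[j+2]) :: l.drop (j + 3)) := by
        apply skip_loop q hq
        rw [← hdec]; exact hl
      have hlen3 : (l.take j ++ (l[j] + l[j+2]) :: l.drop (j + 3)).length
          = l.length - 2 := by
        simp only [List.length_append, List.length_cons, List.length_take,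
          List.length_drop]
        omega
      refine ih _ (by rw [hlen3]; omega) hl2 ?_
      rw [hlen3]
      obtain ⟨t, ht⟩ := hodd
      exact ⟨t - 1, by omega⟩

def mulAt (n : ℤ) (c : ℕ) : ℕ → List ℤ → List ℤ
  | _, [] => []
  | i, a :: t => (if i % 2 = c then n * a else a) :: mulAt n c (i + 1) t

lemma mulAt_length (n : ℤ) (c : ℕ) : ∀ i (l : List ℤ), (mulAt n c i l).length = l.length
  | _, [] => rfl
  | i, a :: t => by simp [mulAt, mulAt_length n c (i+1) t]

lemma mulAt_take (n : ℤ) (c : ℕ) : ∀ i (l : List ℤ) (m : ℕ),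
    (mulAt n c i l).take m = mulAt n c i (l.take m)
  | _, [], m => by simp [mulAt]
  | i, a :: t, 0 => by simp [mulAt]
  | i, a :: t, m + 1 => by
    simp [mulAt, List.take_cons, mulAt_take n c (i+1) t m]

lemma mulAt_snoc (n : ℤ) (c : ℕ) : ∀ i (l : List ℤ) (a : ℤ),
    mulAt n c i (l ++ [a])
      = mulAt n c i l ++ [if (i + l.length) % 2 = c then n * a else a]
  | i, [], a => by simp [mulAt]
  | i, b :: t, a => by
    have h : i + 1 + t.length = i + (t.length + 1) := by omega
    show (if i % 2 = c then n * b else b) :: mulAt n c (i + 1) (t ++ [a]) = _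
    rw [mulAt_snoc n c (i + 1) t a, h]
    simp [mulAt]

lemma mulAt_getD (n : ℤ) (c : ℕ) : ∀ i (l : List ℤ) (j : ℕ),
    (mulAt n c i l).getD j 0 = (if (i + j) % 2 = c then n else 1) * l.getD j 0
  | i, [], j => by simp [mulAt]
  | i, a :: t, 0 => by simp [mulAt]
  | i, a :: t, j + 1 => by
    have h : i + 1 + j = i + (j + 1) := by omega
    simp only [mulAt, List.getD_cons_succ, mulAt_getD n (c) (i+1) t j, h]

lemma mulAt_ne_nil {n : ℤ} {c i : ℕ} {l : List ℤ} (h : l ≠ []) : mulAt n c i l ≠ [] := by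
  intro h'
  apply h
  have := mulAt_length n c i l
  rw [h'] at this
  exact List.length_eq_zero_iff.mp this.symm

lemma cf_mulAt (q : ℝ) (n : ℕ) (hn : 0 < n) (c : ℕ) (hc : c < 2) :
    ∀ l : List ℤ, l ≠ [] →
      cf (q / n) (mulAt n c 0 l)
        = (if (l.length - 1) % 2 = c then (n : ℝ) else 1) * cf q l := by
  have hn' : (n : ℝ) ≠ 0 := Nat.cast_ne_zero.mpr hn.ne'
  intro l
  induction l using List.reverseRecOn with
  | nil => intro h; exact absurd rfl h
  | append_singleton l a ih =>
    intro _
    rcases eq_or_ne l [] with rfl | hl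
    · simp only [List.nil_append, mulAt, List.length_singleton]
      interval_cases c <;> simp [cf_singleton] <;> push_cast <;> ring
    · rw [mulAt_snoc, cf_snoc _ (mulAt_ne_nil hl), cf_snoc q hl, ih hl]
      have hll : 1 ≤ l.length := List.length_pos_iff.mpr hl
      set X := cf q l with hX
      rcases eq_or_ne ((l.length - 1) % 2) c with h | h
      · have h2 : (0 + l.length) % 2 ≠ c := by omega
        have h3 : ((l ++ [a]).length - 1) % 2 ≠ c := by simp; omega
        rw [if_pos h, if_neg h2, if_neg h3, one_mul]
        have : q / n * ((n : ℝ) * X) = q * X := by field_simp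
        rw [this]
      · have hc2 : c < 2 := hc
        have h2 : (0 + l.length) % 2 = c := by omega
        have h3 : ((l ++ [a]).length - 1) % 2 = c := by simp; omega
        rw [if_neg h, if_pos h2, if_pos h3, one_mul]
        have e1 : q / n * X = q * X / n := by ring
        rw [e1, one_div_div]
        push_cast
        rw [div_eq_mul_one_div (n : ℝ) (q * X)]
        ring

lemma take_ne_nil' {p : List ℤ} (hp : p ≠ []) (j : ℕ) : p.take (j + 1) ≠ [] := by
  refine List.length_pos_iff.mp ?_
  rw [List.length_take]
  have := List.length_pos_iff.mpr hp
  omega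

lemma length_take_sub {p : List ℤ} {j : ℕ} (h : j + 1 < p.length) :
    (p.take (j + 1)).length - 1 = j := by
  rw [List.length_take]; omega

lemma weight_mulAt (q : ℝ) (n : ℕ) (hn : 0 < n) (c : ℕ) (hc : c < 2)
    (p : List ℤ) (hp : p ≠ []) :
    weight (q / n) (mulAt n c 0 p)
      = (∏ j ∈ Finset.range (p.length - 1), if j % 2 = c then (n : ℝ) else 1) *
        (Real.sqrt ((q / n) ^ (p.length - 1)) *
          ∏ j ∈ Finset.range (p.length - 1), |cf q (p.take (j + 1))|) := by
  unfold weight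
  rw [mulAt_length]
  have key : ∀ j ∈ Finset.range (p.length - 1),
      |cf (q / n) ((mulAt n c 0 p).take (j + 1))|
        = (if j % 2 = c then (n : ℝ) else 1) * |cf q (p.take (j + 1))| := by
    intro j hj
    rw [Finset.mem_range] at hj
    have hjp : j + 1 < p.length := by
      have := List.length_pos_iff.mpr hp; omega
    rw [mulAt_take, cf_mulAt q n hn c hc _ (take_ne_nil' hp j), length_take_sub hjp,
      abs_mul]
    congr 1
    split_ifs
    · exact abs_of_nonneg (by positivity)
    · exact abs_one
  rw [Finset.prod_congr rfl key, Finset.prod_mul_distrib]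
  ring

lemma prod_even_eq (r : ℝ) : ∀ t : ℕ,
    (∏ j ∈ Finset.range (2 * t + 1), if j % 2 = 0 then r else 1)
      = r * ∏ j ∈ Finset.range (2 * t + 1), if j % 2 = 1 then r else 1 := by
  intro t
  induction t with
  | zero => simp
  | succ t ih =>
    have h : 2 * (t + 1) + 1 = (2 * t + 1) + 1 + 1 := by ring
    have h1 : (2 * t + 1) % 2 = 1 := by omega
    have h2 : (2 * t + 1 + 1) % 2 = 0 := by omega
    rw [h]
    conv_lhs => rw [Finset.prod_range_succ, Finset.prod_range_succ]
    conv_rhs => rw [Finset.prod_range_succ, Finset.prod_range_succ]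
    rw [ih, h1, h2]
    norm_num
    ring

theorem stmt8 (q : ℝ) (hq : 0 < q) (m : List ℤ) (hm : IsLoop q m)
    (hodd : Odd (m.length - 1)) (n : ℕ) (hn : 2 ≤ n) :
    ∃ m' m'' : List ℤ, IsPath (q / n) m' ∧ IsProper m' ∧ IsPath (q / n) m'' ∧ IsProper m'' ∧
      cf (q / n) m' = cf (q / n) m'' ∧ weight (q / n) m' ≠ weight (q / n) m'' := by
  have hq0 : q ≠ 0 := ne_of_gt hq
  obtain ⟨p, hploop, hpodd, hpprop⟩ :=
    exists_proper_loop q hq0 m.length m le_rfl hm hodd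
  have hppath := hploop.1
  have hpne : p ≠ [] := hppath.1
  have hn0 : 0 < n := by omega
  have hnR : (1 : ℝ) < (n : ℝ) := by exact_mod_cast (by omega : 1 < n)
  have hnpos : (0 : ℝ) < (n : ℝ) := by positivity
  have hppos : 1 ≤ p.length := List.length_pos_iff.mpr hpne
  -- paths
  have hpath : ∀ c < 2, IsPath (q / n) (mulAt n c 0 p) := by
    intro c hc
    refine ⟨mulAt_ne_nil hpne, ?_⟩
    intro s hs hspre hslen
    rw [mulAt_length] at hslen
    have hsl : 1 ≤ s.length := List.length_pos_iff.mpr hs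
    rw [List.prefix_iff_eq_take.mp hspre, mulAt_take,
      cf_mulAt q n hn0 c hc _ (List.length_pos_iff.mp (by rw [List.length_take]; omega))]
    refine mul_ne_zero ?_ ?_
    · split_ifs
      · exact ne_of_gt hnpos
      · exact one_ne_zero
    · refine hppath.2 _ (List.length_pos_iff.mp (by rw [List.length_take]; omega))
        (List.take_prefix _ _) ?_
      rw [List.length_take]; omega
  -- properness
  have hprop : ∀ c : ℕ, IsProper (mulAt n c 0 p) := by
    intro c i hi
    rw [mulAt_length] at hi
    rw [mulAt_getD]
    refine mul_ne_zero ?_ (hpprop i hi)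
    split_ifs
    · simp; omega
    · exact one_ne_zero
  -- cf values
  have hcf : ∀ c < 2, cf (q / n) (mulAt n c 0 p) = 0 := by
    intro c hc
    rw [cf_mulAt q n hn0 c hc p hpne, hploop.2, mul_zero]
  -- weights
  obtain ⟨t, ht⟩ := hpodd
  set S := Real.sqrt ((q / n) ^ (p.length - 1)) with hS
  set P := ∏ j ∈ Finset.range (p.length - 1), |cf q (p.take (j + 1))| with hP
  have hSpos : 0 < S := Real.sqrt_pos.mpr (pow_pos (div_pos hq hnpos) _)
  have hPpos : 0 < P := by
    rw [hP]
    refine Finset.prod_pos ?_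
    intro j hj
    rw [Finset.mem_range] at hj
    refine abs_pos.mpr (hppath.2 _ (take_ne_nil' hpne j) (List.take_prefix _ _) ?_)
    rw [List.length_take]; omega
  have hA1pos : 0 < ∏ j ∈ Finset.range (p.length - 1), (if j % 2 = 1 then (n : ℝ) else 1) := by
    refine Finset.prod_pos ?_
    intro j _
    split_ifs
    · exact hnpos
    · exact one_pos
  have hw1 := weight_mulAt q n hn0 1 (by omega) p hpne
  have hw0 := weight_mulAt q n hn0 0 (by omega) p hpne
  refine ⟨mulAt n 1 0 p, mulAt n 0 0 p, hpath 1 (by omega), hprop 1,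
    hpath 0 (by omega), hprop 0, by rw [hcf 1 (by omega), hcf 0 (by omega)], ?_⟩
  rw [hw1, hw0, ← hS, ← hP, ht, prod_even_eq]
  intro h
  set A := ∏ j ∈ Finset.range (2 * t + 1), (if j % 2 = 1 then (n : ℝ) else 1) with hA
  rw [ht] at hA1pos
  nlinarith [mul_pos hSpos hPpos, mul_pos hA1pos (mul_pos hSpos hPpos)]
end
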